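/- Let 𝒟 be a triangulated category and let 𝒟^{≥0} and 𝒟^{≤0} be full subcategories closed under isomorphisms, and set 𝒟^{≥n} = 𝒟^{≥0}[n], 𝒟^{≤n} = 𝒟^{≤0}[n]. Assume: (1) 𝒟^{≥0} is closed under extensions and under the shift [1], and 𝒟^{≤0} is closed under extensions and under the shift [−1]; (2) every object of 𝒟 lies in 𝒟^{≥n} for some integer n; (3) Hom(X, Y) = 0 for all X ∈ 𝒟^{≥0} and Y ∈ 𝒟^{≤−1}; (4) for every X ∈ 𝒟^{≥0} there exists X₀ ∈ 𝒟^{≥0} ∩ 𝒟^{≤0} and a morphism X → X₀ whose fiber (i.e., the third object F in a distinguished triangle F → X → X₀ → F[1]) lies in 𝒟^{≥1}. Then the pair (𝒟^{≥0}, 𝒟^{≤0}) defines a t-structure on 𝒟; in particular, for every object X there is a distinguished triangle X_{≥0} → X → X_{≤−1} → X_{≥0}[1] with X_{≥0} ∈ 𝒟^{≥0} and X_{≤−1} ∈ 𝒟^{≤−1}. -/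

import Mathlib

open CategoryTheory CategoryTheory.Limits CategoryTheory.Pretriangulated

/-- Recognition criterion for t-structures (Proposition 3.5 of the paper).

Let `𝒟` be a triangulated category with full subcategories `𝒟^{≥0}`, `𝒟^{≤0}` closed
under isomorphisms, encoded by predicates `P` (`X ∈ 𝒟^{≥0}` iff `P X`) and `Q`
(`X ∈ 𝒟^{≤0}` iff `Q X`); then `X ∈ 𝒟^{≥n}` iff `P (X⟦-n⟧)` and `X ∈ 𝒟^{≤n}` iff
`Q (X⟦-n⟧)`. Assume:
(1) `𝒟^{≥0}` is closed under extensions and `[1]`, and `𝒟^{≤0}` under extensions and `[-1]`;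
(2) every object lies in some `𝒟^{≥n}`;
(3) `Hom(X, Y) = 0` for `X ∈ 𝒟^{≥0}` and `Y ∈ 𝒟^{≤−1}` (i.e. `Q (Y⟦1⟧)`);
(4) every `X ∈ 𝒟^{≥0}` admits a map `X → X₀` with `X₀ ∈ 𝒟^{≥0} ∩ 𝒟^{≤0}` whose fiber
lies in `𝒟^{≥1}`.
Then `(𝒟^{≥0}, 𝒟^{≤0})` is a t-structure: the Hom-vanishing and shift-inclusion axioms
hold, and every object `X` fits into a distinguished triangle
`X_{≥0} → X → X_{≤−1} → X_{≥0}[1]` with `X_{≥0} ∈ 𝒟^{≥0}` and `X_{≤−1} ∈ 𝒟^{≤−1}`. -/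
theorem stmt12 (D : Type*) [Category D] [Preadditive D] [HasZeroObject D]
    [HasShift D ℤ] [∀ n : ℤ, (shiftFunctor D n).Additive] [Pretriangulated D]
    (P Q : D → Prop)
    (hPiso : ∀ {X Y : D}, (X ≅ Y) → P X → P Y)
    (hQiso : ∀ {X Y : D}, (X ≅ Y) → Q X → Q Y)
    -- (1) closure under shifts and extensions
    (hPshift : ∀ X : D, P X → P (X⟦(1 : ℤ)⟧))
    (hQshift : ∀ X : D, Q X → Q (X⟦(-1 : ℤ)⟧))
    (hPext : ∀ T : Triangle D, T ∈ (distTriang D) → P T.obj₁ → P T.obj₃ → P T.obj₂)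
    (hQext : ∀ T : Triangle D, T ∈ (distTriang D) → Q T.obj₁ → Q T.obj₃ → Q T.obj₂)
    -- (2) every object is bounded below
    (hbound : ∀ X : D, ∃ n : ℤ, P (X⟦-n⟧))
    -- (3) Hom-vanishing
    (hvanish : ∀ (X Y : D), P X → Q (Y⟦(1 : ℤ)⟧) → ∀ f : X ⟶ Y, f = 0)
    -- (4) truncation of nonnegative objects
    (htrunc : ∀ X : D, P X → ∃ (X₀ : D) (g : X ⟶ X₀) (F : D) (f : F ⟶ X)
        (h : X₀ ⟶ F⟦(1 : ℤ)⟧),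
        P X₀ ∧ Q X₀ ∧ Triangle.mk f g h ∈ (distTriang D) ∧ P (F⟦(-1 : ℤ)⟧)) :
    -- conclusion: the pair `(P, Q)` defines a t-structure
    (∀ (X Y : D), P X → Q (Y⟦(1 : ℤ)⟧) → ∀ f : X ⟶ Y, f = 0) ∧
    (∀ X : D, P X → P (X⟦(1 : ℤ)⟧)) ∧
    (∀ X : D, Q X → Q (X⟦(-1 : ℤ)⟧)) ∧
    (∀ X : D, ∃ (A B : D) (f : A ⟶ X) (g : X ⟶ B) (h : B ⟶ A⟦(1 : ℤ)⟧),
        Triangle.mk f g h ∈ (distTriang D) ∧ P A ∧ Q (B⟦(1 : ℤ)⟧)) := by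
  open ZeroObject Category Preadditive in
  refine ⟨hvanish, hPshift, hQshift, ?_⟩
  -- basic shift isomorphisms
  have sIso : ∀ (a b c : ℤ), a + b = c → ∀ Z : D, (Z⟦a⟧)⟦b⟧ ≅ Z⟦c⟧ :=
    fun a b c h Z => ((shiftFunctorAdd' D a b c h).app Z).symm
  have zIso : ∀ Z : D, Z⟦(0:ℤ)⟧ ≅ Z := fun Z => (shiftFunctorZero D ℤ).app Z
  -- monotonicity of P along upward shifts
  have hPadd : ∀ (n : ℕ) (Z : D) (a : ℤ), P (Z⟦a⟧) → P (Z⟦a + (n:ℤ)⟧) := by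
    intro n
    induction n with
    | zero => intro Z a h; simpa using h
    | succ k ih =>
        intro Z a h
        exact hPiso (sIso (a + (k:ℤ)) 1 (a + ((k+1:ℕ):ℤ)) (by push_cast; ring) Z)
          (hPshift _ (ih Z a h))
  have hPmono : ∀ (Z : D) (a b : ℤ), a ≤ b → P (Z⟦a⟧) → P (Z⟦b⟧) := by
    intro Z a b hab h
    have := hPadd (b - a).toNat Z a h
    rwa [show a + ((b - a).toNat : ℤ) = b by omega] at this
  have hQsub : ∀ (n : ℕ) (Z : D) (a : ℤ), Q (Z⟦a⟧) → Q (Z⟦a - (n:ℤ)⟧) := by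
    intro n
    induction n with
    | zero => intro Z a h; simpa using h
    | succ k ih =>
        intro Z a h
        exact hQiso (sIso (a - (k:ℤ)) (-1) (a - ((k+1:ℕ):ℤ)) (by push_cast; ring) Z)
          (hQshift _ (ih Z a h))
  have hQmono : ∀ (Z : D) (a b : ℤ), a ≤ b → Q (Z⟦b⟧) → Q (Z⟦a⟧) := by
    intro Z a b hab h
    have := hQsub (b - a).toNat Z b h
    rwa [show b - ((b - a).toNat : ℤ) = a by omega] at this
  -- Hom-vanishing at arbitrary level
  have hv : ∀ (Z W : D) (k : ℤ), P (Z⟦k⟧) → Q (W⟦k + 1⟧) → ∀ f : Z ⟶ W, f = 0 := by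
    intro Z W k hZ hW f
    have h0 : f⟦k⟧' = 0 :=
      hvanish _ _ hZ (hQiso (sIso k 1 (k+1) rfl W).symm hW) _
    exact (shiftFunctor D k).map_injective (by rw [h0, Functor.map_zero])
  -- the zero object belongs to both classes
  have P0 : P (0 : D) := by
    obtain ⟨n, hn⟩ := hbound 0
    exact hPiso (((shiftFunctor D (-n)).map_isZero (isZero_zero D)).iso (isZero_zero D)) hn
  have Q0 : Q (0 : D) := by
    obtain ⟨Y₀, g₀, F₀, f₀, h₀, hPY₀, hQY₀, hTY₀, -⟩ := htrunc 0 P0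
    have hd := rot_of_distTriang _ (contractible_distinguished (Y₀⟦(-1:ℤ)⟧))
    have hq1 : Q ((contractibleTriangle (Y₀⟦(-1:ℤ)⟧)).rotate.obj₁) := hQshift _ hQY₀
    have hq3 : Q ((contractibleTriangle (Y₀⟦(-1:ℤ)⟧)).rotate.obj₃) :=
      hQiso (sIso (-1) 1 0 (by ring) Y₀ ≪≫ zIso Y₀).symm hQY₀
    exact hQext _ hd hq1 hq3
  have zsh : ∀ (a : ℤ), ((0:D)⟦a⟧) ≅ (0:D) :=
    fun a => ((shiftFunctor D a).map_isZero (isZero_zero D)).iso (isZero_zero D)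
  -- the key induction
  have key : ∀ (m : ℕ) (X : D), P (X⟦(m : ℤ)⟧) →
      ∃ (A E : D) (u : A ⟶ X) (v : X ⟶ E) (k : E ⟶ A⟦(1:ℤ)⟧),
        (Triangle.mk u v k ∈ distTriang D) ∧ P A ∧ Q (E⟦(1:ℤ)⟧) ∧ P (E⟦(m:ℤ)⟧) := by
    intro m
    induction m with
    | zero =>
        intro X hX
        simp only [Nat.cast_zero] at hX ⊢
        refine ⟨X, 0, 𝟙 X, 0, 0, contractible_distinguished X, hPiso (zIso X) hX, ?_, ?_⟩
        · exact hQiso (zsh 1).symm Q0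
        · exact hPiso (zsh 0).symm P0
    | succ m ih =>
        intro X hX
        have hX' : P (X⟦(m : ℤ) + 1⟧) := by
          rwa [show ((m+1 : ℕ) : ℤ) = (m:ℤ) + 1 by push_cast; ring] at hX
        obtain ⟨Y₀, g₀, F₀, f₀, h₀, hPY₀, hQY₀, hTY₀, hFY₀⟩ := htrunc _ hX'
        -- shift the truncation triangle down to the level of `X`
        have hTs : (Triangle.shiftFunctor D (-((m:ℤ)+1))).obj (Triangle.mk f₀ g₀ h₀)
            ∈ distTriang D := Triangle.shift_distinguished _ hTY₀ (-((m:ℤ)+1))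
        set Ts := (Triangle.shiftFunctor D (-((m:ℤ)+1))).obj (Triangle.mk f₀ g₀ h₀) with hTsdef
        have e₂ : ((X⟦(m:ℤ)+1⟧)⟦-((m:ℤ)+1)⟧) ≅ X :=
          sIso ((m:ℤ)+1) (-((m:ℤ)+1)) 0 (by ring) X ≪≫ zIso X
        obtain ⟨f₁, hf₁⟩ : ∃ f₁ : (F₀⟦-((m:ℤ)+1)⟧ : D) ⟶ X, f₁ = Ts.mor₁ ≫ e₂.hom := ⟨_, rfl⟩
        obtain ⟨q₁, hq₁⟩ : ∃ q₁ : X ⟶ (Y₀⟦-((m:ℤ)+1)⟧ : D), q₁ = e₂.inv ≫ Ts.mor₂ := ⟨_, rfl⟩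
        obtain ⟨h₁, hh₁⟩ : ∃ h₁ : (Y₀⟦-((m:ℤ)+1)⟧ : D) ⟶ (F₀⟦-((m:ℤ)+1)⟧)⟦(1:ℤ)⟧,
            h₁ = Ts.mor₃ := ⟨_, rfl⟩
        have hTmd : Triangle.mk f₁ q₁ h₁ ∈ distTriang D := by
          refine isomorphic_distinguished _ hTs _ ?_
          exact Triangle.isoMk _ _ (Iso.refl _) e₂.symm (Iso.refl _)
            (by simp [hf₁]; erw [assoc, e₂.hom_inv_id, comp_id, id_comp]) (by simp [hq₁]; exact comp_id _)
            (by simp [hh₁]; erw [CategoryTheory.Functor.map_id, comp_id, id_comp])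
        -- T2 = (C, F, X) with C := Y₀⟦-(m+1)⟧⟦-1⟧, in explicit form
        obtain ⟨w, hw⟩ : ∃ w : (((Y₀⟦-((m:ℤ)+1)⟧)⟦(-1:ℤ)⟧ : D) ⟶ (F₀⟦-((m:ℤ)+1)⟧ : D)),
            w = (Triangle.mk f₁ q₁ h₁).invRotate.mor₁ := ⟨_, rfl⟩
        obtain ⟨e, he⟩ : ∃ e : X ⟶ (((Y₀⟦-((m:ℤ)+1)⟧)⟦(-1:ℤ)⟧ : D)⟦(1:ℤ)⟧),
            e = (Triangle.mk f₁ q₁ h₁).invRotate.mor₃ := ⟨_, rfl⟩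
        have hT2 : Triangle.mk w f₁ e ∈ distTriang D := by
          rw [hw, he]; exact inv_rot_of_distTriang _ hTmd
        -- memberships
        have hQY0 : Q (Y₀⟦(0:ℤ)⟧) := hQiso (zIso Y₀).symm hQY₀
        have hFm : P ((F₀⟦-((m:ℤ)+1)⟧)⟦(m:ℤ)⟧) :=
          hPiso (sIso (-((m:ℤ)+1)) (m:ℤ) (-1) (by ring) F₀).symm hFY₀
        have ιC1 : (((Y₀⟦-((m:ℤ)+1)⟧)⟦(-1:ℤ)⟧)⟦(1:ℤ)⟧) ≅ Y₀⟦-((m:ℤ)+1)⟧ :=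
          sIso (-1) 1 0 (by ring) _ ≪≫ zIso _
        have hC1shift : ∀ (k c : ℤ), -((m:ℤ)+1) + k = c →
            (((((Y₀⟦-((m:ℤ)+1)⟧)⟦(-1:ℤ)⟧)⟦(1:ℤ)⟧)⟦k⟧) ≅ Y₀⟦c⟧) :=
          fun k c h => (shiftFunctor D k).mapIso ιC1 ≪≫ sIso (-((m:ℤ)+1)) k c h Y₀
        have hQC1 : Q (((Y₀⟦-((m:ℤ)+1)⟧)⟦(-1:ℤ)⟧)⟦(1:ℤ)⟧) :=
          hQiso ιC1.symm (hQmono Y₀ (-((m:ℤ)+1)) 0 (by omega) hQY0)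
        -- apply the induction hypothesis to the fiber F₀⟦-(m+1)⟧
        obtain ⟨A, B, a, p, r, hT1, hPA, hQB1, hPBm⟩ := ih (F₀⟦-((m:ℤ)+1)⟧) hFm
        have hPA0 : P (A⟦(0:ℤ)⟧) := hPiso (zIso A).symm hPA
        have hQB : Q B := hQiso (sIso 1 (-1) 0 (by ring) B ≪≫ zIso B) (hQshift _ hQB1)
        -- Hom(A, C) = 0
        have hAC : ∀ f : A ⟶ ((Y₀⟦-((m:ℤ)+1)⟧)⟦(-1:ℤ)⟧), f = 0 :=
          hv A _ 0 hPA0 (by simpa using hQC1)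
        -- the extension E' of C₀ by B : cone of δ := w ≫ p
        obtain ⟨E', i, j, hT3⟩ := Pretriangulated.distinguished_cocone_triangle (w ≫ p)
        -- memberships of E'
        have hQE'1 : Q (E'⟦(1:ℤ)⟧) := by
          have hS1 : (Triangle.shiftFunctor D 1).obj ((Triangle.mk (w ≫ p) i j).rotate)
              ∈ distTriang D :=
            Triangle.shift_distinguished _ (rot_of_distTriang _ hT3) 1
          have h3 : Q ((((Y₀⟦-((m:ℤ)+1)⟧)⟦(-1:ℤ)⟧)⟦(1:ℤ)⟧)⟦(1:ℤ)⟧) :=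
            hQiso (hC1shift 1 (-(m:ℤ)) (by ring)).symm (hQmono Y₀ (-(m:ℤ)) 0 (by omega) hQY0)
          exact hQext _ hS1 hQB1 h3
        have hPE'm1 : P (E'⟦(m:ℤ)+1⟧) := by
          have hS2 : (Triangle.shiftFunctor D ((m:ℤ)+1)).obj
              ((Triangle.mk (w ≫ p) i j).rotate) ∈ distTriang D :=
            Triangle.shift_distinguished _ (rot_of_distTriang _ hT3) ((m:ℤ)+1)
          have h1 : P (B⟦(m:ℤ)+1⟧) :=
            hPiso (sIso (m:ℤ) 1 ((m:ℤ)+1) rfl B) (hPshift _ hPBm)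
          have h3 : P ((((Y₀⟦-((m:ℤ)+1)⟧)⟦(-1:ℤ)⟧)⟦(1:ℤ)⟧)⟦(m:ℤ)+1⟧) :=
            hPiso ((hC1shift ((m:ℤ)+1) 0 (by ring)) ≪≫ zIso Y₀).symm hPY₀
          exact hPext _ hS2 h1 h3
        -- the map v' : X → E'
        obtain ⟨v'₀, hv'₁, hv'₂⟩ := Pretriangulated.complete_distinguished_triangle_morphism
          (Triangle.mk w f₁ e) (Triangle.mk (w ≫ p) i j) hT2 hT3 (𝟙 _) p
          (by show w ≫ p = 𝟙 _ ≫ (w ≫ p); rw [id_comp])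
        obtain ⟨v', hv'A, heA⟩ : ∃ v' : X ⟶ E', f₁ ≫ v' = p ≫ i ∧ e = v' ≫ j := by
          refine ⟨v'₀, hv'₁, ?_⟩
          have h := hv'₂
          erw [CategoryTheory.Functor.map_id, comp_id] at h
          exact h
        -- the fiber A' := Z⟦-1⟧ of v'
        obtain ⟨Z, z₂, z₃, hT0⟩ := Pretriangulated.distinguished_cocone_triangle v'
        have h12z : v' ≫ z₂ = 0 := comp_distTriang_mor_zero₁₂ _ hT0
        obtain ⟨u', hu'⟩ : ∃ u' : ((Z⟦(-1:ℤ)⟧ : D) ⟶ X),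
            u' = (Triangle.mk v' z₂ z₃).invRotate.mor₁ := ⟨_, rfl⟩
        obtain ⟨k', hk'⟩ : ∃ k' : E' ⟶ ((Z⟦(-1:ℤ)⟧ : D)⟦(1:ℤ)⟧),
            k' = (Triangle.mk v' z₂ z₃).invRotate.mor₃ := ⟨_, rfl⟩
        have hk'f : k' = z₂ ≫ (shiftEquiv D (1:ℤ)).counitIso.inv.app Z := hk'
        have hT6 : Triangle.mk u' v' k' ∈ distTriang D := by
          rw [hu', hk']; exact inv_rot_of_distTriang _ hT0
        have hu'v' : u' ≫ v' = 0 := comp_distTriang_mor_zero₁₂ _ hT6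
        -- construction of α : A → A' via TR3 on the rotated triangles
        obtain ⟨c, hc₁, hc₂⟩ := Pretriangulated.complete_distinguished_triangle_morphism
          (Triangle.mk a p r).rotate (Triangle.mk u' v' k').rotate (rot_of_distTriang _ hT1)
          (rot_of_distTriang _ hT6) f₁ i (by exact hv'A.symm)
        obtain ⟨α, hα⟩ : ∃ α : A ⟶ (Z⟦(-1:ℤ)⟧ : D), α⟦(1:ℤ)⟧' = c :=
          ⟨(shiftFunctor D (1:ℤ)).preimage c, (shiftFunctor D (1:ℤ)).map_preimage c⟩
        have hrα : r ≫ α⟦(1:ℤ)⟧' = i ≫ k' := by rw [hα]; exact hc₁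
        have hu : a ≫ f₁ = α ≫ u' := by
          have h2 : (-a⟦(1:ℤ)⟧') ≫ f₁⟦(1:ℤ)⟧' = c ≫ (-u'⟦(1:ℤ)⟧') := hc₂
          erw [neg_comp, comp_neg, neg_inj, ← CategoryTheory.Functor.map_comp, ← hα,
            ← CategoryTheory.Functor.map_comp] at h2
          exact (shiftFunctor D (1:ℤ)).map_injective h2
        -- the lift lam : A' → F of u'
        obtain ⟨lam₀, hlam₀⟩ := Triangle.coyoneda_exact₃ (Triangle.mk w f₁ e) hT2 u'
          (by show u' ≫ e = 0; rw [heA, ← assoc, hu'v', zero_comp])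
        obtain ⟨lam, hlamA⟩ : ∃ lam : ((Z⟦(-1:ℤ)⟧ : D) ⟶ (F₀⟦-((m:ℤ)+1)⟧ : D)),
            u' = lam ≫ f₁ := ⟨lam₀, hlam₀⟩
        -- the factorization lam ≫ p = c' ≫ δ
        obtain ⟨c'₀, hc'₀⟩ := Triangle.coyoneda_exact₂ (Triangle.mk (w ≫ p) i j) hT3
          (lam ≫ p) (by
            show (lam ≫ p) ≫ i = 0
            rw [assoc, ← hv'A, ← assoc, ← hlamA, hu'v'])
        obtain ⟨c', hc'A⟩ : ∃ c' : ((Z⟦(-1:ℤ)⟧ : D) ⟶ ((Y₀⟦-((m:ℤ)+1)⟧)⟦(-1:ℤ)⟧ : D)),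
            lam ≫ p = c' ≫ (w ≫ p) := ⟨c'₀, hc'₀⟩
        -- the retraction candidate β : A' → A
        obtain ⟨β₀, hβ₀⟩ := Triangle.coyoneda_exact₂ (Triangle.mk a p r) hT1
          (lam - c' ≫ w) (by
            show (lam - c' ≫ w) ≫ p = 0
            rw [sub_comp, assoc, ← hc'A, sub_self])
        obtain ⟨β, hβA⟩ : ∃ β : ((Z⟦(-1:ℤ)⟧ : D) ⟶ A),
            lam - c' ≫ w = β ≫ a := ⟨β₀, hβ₀⟩
        -- α ≫ lam = a
        have hαlam : α ≫ lam = a := by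
          obtain ⟨d₀, hd₀⟩ := Triangle.coyoneda_exact₂ (Triangle.mk w f₁ e) hT2
            (α ≫ lam - a) (by
              show (α ≫ lam - a) ≫ f₁ = 0
              rw [sub_comp, assoc, ← hlamA, ← hu, sub_self])
          obtain ⟨d, hdA⟩ : ∃ d : A ⟶ ((Y₀⟦-((m:ℤ)+1)⟧)⟦(-1:ℤ)⟧ : D),
              α ≫ lam - a = d ≫ w := ⟨d₀, hd₀⟩
          rw [hAC d, zero_comp] at hdA
          rwa [sub_eq_zero] at hdA
        -- α ≫ β = 𝟙 A
        obtain ⟨b, hb⟩ : ∃ b : ((B⟦(-1:ℤ)⟧ : D) ⟶ A),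
            b = (Triangle.mk a p r).invRotate.mor₁ := ⟨_, rfl⟩
        have hαβ : α ≫ β = 𝟙 A := by
          have h1 : (α ≫ β - 𝟙 A) ≫ a = 0 := by
            rw [sub_comp, id_comp, assoc, ← hβA, comp_sub, hαlam, ← assoc,
              hAC (α ≫ c'), zero_comp, sub_zero, sub_self]
          obtain ⟨s₁, hs₁⟩ := Triangle.coyoneda_exact₂ (Triangle.mk a p r).invRotate
            (inv_rot_of_distTriang _ hT1) (α ≫ β - 𝟙 A) (by exact h1)
          obtain ⟨s₀, hs₀A⟩ : ∃ s₀ : A ⟶ ((B⟦(-1:ℤ)⟧ : D)),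
              α ≫ β - 𝟙 A = s₀ ≫ b := ⟨s₁, by rw [hb]; exact hs₁⟩
          have hs₀0 : s₀ = 0 := hv A (B⟦(-1:ℤ)⟧) 0 hPA0
            (by simpa using hQiso (sIso (-1) 1 0 (by ring) B ≪≫ zIso B).symm hQB) s₀
          rw [hs₀0, zero_comp] at hs₀A
          rwa [sub_eq_zero] at hs₀A
        -- the fibration z : E'⟦-1⟧ → A'
        obtain ⟨z, hz⟩ : ∃ z : ((E'⟦(-1:ℤ)⟧ : D) ⟶ (Z⟦(-1:ℤ)⟧ : D)),
            z = (Triangle.mk u' v' k').invRotate.mor₁ := ⟨_, rfl⟩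
        -- the cone N of α
        obtain ⟨N, x, y, hT8⟩ := Pretriangulated.distinguished_cocone_triangle α
        have hαx : α ≫ x = 0 := comp_distTriang_mor_zero₁₂ _ hT8
        have hy : y = 0 := by
          have h31 : y ≫ α⟦(1:ℤ)⟧' = 0 := comp_distTriang_mor_zero₃₁ _ hT8
          calc y = y ≫ (α⟦(1:ℤ)⟧' ≫ β⟦(1:ℤ)⟧') := by
                rw [← CategoryTheory.Functor.map_comp, hαβ,
                  CategoryTheory.Functor.map_id, comp_id]
            _ = 0 := by rw [← assoc, h31, zero_comp]
        -- the idempotent 𝟙 - β ≫ α and its structure maps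
        have h12 : w ≫ f₁ = 0 := comp_distTriang_mor_zero₁₂ _ hT2
        have hεu : (𝟙 (Z⟦(-1:ℤ)⟧ : D) - β ≫ α) ≫ u' = 0 := by
          rw [sub_comp, id_comp, assoc, ← hu, ← assoc, ← hβA, sub_comp, assoc, h12,
            comp_zero, sub_zero, ← hlamA, sub_self]
        have hαε : α ≫ (𝟙 (Z⟦(-1:ℤ)⟧ : D) - β ≫ α) = 0 := by
          rw [comp_sub, comp_id, ← assoc, hαβ, id_comp, sub_self]
        obtain ⟨τ₀, hτ₀⟩ := Triangle.yoneda_exact₂ (Triangle.mk α x y) hT8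
          (𝟙 (Z⟦(-1:ℤ)⟧ : D) - β ≫ α) (by exact hαε)
        obtain ⟨τ, hτA⟩ : ∃ τ : N ⟶ (Z⟦(-1:ℤ)⟧ : D),
            𝟙 (Z⟦(-1:ℤ)⟧ : D) - β ≫ α = x ≫ τ := ⟨τ₀, hτ₀⟩
        obtain ⟨s₂, hs₂⟩ := Triangle.coyoneda_exact₃ (Triangle.mk α x y) hT8 (𝟙 N)
          (by show 𝟙 N ≫ y = 0; rw [hy, comp_zero])
        obtain ⟨s, hsA⟩ : ∃ s : N ⟶ (Z⟦(-1:ℤ)⟧ : D), 𝟙 N = s ≫ x := ⟨s₂, hs₂⟩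
        have hεx : (𝟙 (Z⟦(-1:ℤ)⟧ : D) - β ≫ α) ≫ x = x := by
          rw [sub_comp, id_comp, assoc, hαx, comp_zero, sub_zero]
        have hτx : τ ≫ x = 𝟙 N := by
          have h1 : x ≫ (τ ≫ x) = x := by rw [← assoc, ← hτA, hεx]
          calc τ ≫ x = (s ≫ x) ≫ (τ ≫ x) := by rw [← hsA, id_comp]
            _ = s ≫ (x ≫ (τ ≫ x)) := by rw [assoc]
            _ = s ≫ x := by rw [h1]
            _ = 𝟙 N := hsA.symm
        have hτu : τ ≫ u' = 0 := by
          have h1 : x ≫ (τ ≫ u') = 0 := by rw [← assoc, ← hτA, hεu]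
          calc τ ≫ u' = (s ≫ x) ≫ (τ ≫ u') := by rw [← hsA, id_comp]
            _ = s ≫ (x ≫ (τ ≫ u')) := by rw [assoc]
            _ = 0 := by rw [h1, comp_zero]
        obtain ⟨tN₀, htN₀⟩ := Triangle.coyoneda_exact₂ (Triangle.mk u' v' k').invRotate
          (inv_rot_of_distTriang _ hT6) τ (by exact hτu)
        obtain ⟨tN, htNA⟩ : ∃ tN : N ⟶ ((E'⟦(-1:ℤ)⟧ : D)),
            τ = tN ≫ z := ⟨tN₀, by rw [hz]; exact htN₀⟩
        -- the key identity : i⟦-1⟧ ≫ z = b ≫ α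
        have hiz : i⟦(-1:ℤ)⟧' ≫ z = b ≫ α := by
          rw [hz, hb]
          show i⟦(-1:ℤ)⟧' ≫
              (-k'⟦(-1:ℤ)⟧' ≫ (shiftEquiv D (1:ℤ)).unitIso.inv.app (Z⟦(-1:ℤ)⟧ : D))
            = (-r⟦(-1:ℤ)⟧' ≫ (shiftEquiv D (1:ℤ)).unitIso.inv.app A) ≫ α
          have hnat : ((α⟦(1:ℤ)⟧')⟦(-1:ℤ)⟧') ≫
              (shiftEquiv D (1:ℤ)).unitIso.inv.app (Z⟦(-1:ℤ)⟧ : D) =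
              (shiftEquiv D (1:ℤ)).unitIso.inv.app A ≫ α := by
            exact (shiftEquiv D (1:ℤ)).unitIso.inv.naturality α
          erw [comp_neg, neg_comp, neg_inj, ← assoc, ← CategoryTheory.Functor.map_comp,
            ← hrα, CategoryTheory.Functor.map_comp]
          erw [assoc, assoc]
          rw [hnat]; rfl
        -- v'⟦-1⟧ ≫ z = 0
        have hvz : v'⟦(-1:ℤ)⟧' ≫ z = 0 := by
          have h1 : v' ≫ k' = 0 := by
            erw [hk'f, ← assoc, h12z, zero_comp]
          rw [hz]
          show v'⟦(-1:ℤ)⟧' ≫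
            (-k'⟦(-1:ℤ)⟧' ≫ (shiftEquiv D (1:ℤ)).unitIso.inv.app (Z⟦(-1:ℤ)⟧ : D)) = 0
          erw [comp_neg, neg_eq_zero, ← assoc, ← CategoryTheory.Functor.map_comp, h1,
            CategoryTheory.Functor.map_zero, zero_comp]
        -- the composite z ≫ x and its shift
        have hif : i⟦(-1:ℤ)⟧' ≫ (z ≫ x) = 0 := by
          rw [← assoc, hiz, assoc, hαx, comp_zero]
        have hiF : i ≫ ((shiftEquiv D (1:ℤ)).counitIso.inv.app E' ≫ (z ≫ x)⟦(1:ℤ)⟧') = 0 := by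
          have hnat : i ≫ (shiftEquiv D (1:ℤ)).counitIso.inv.app E' =
              (shiftEquiv D (1:ℤ)).counitIso.inv.app B ≫ ((i⟦(-1:ℤ)⟧')⟦(1:ℤ)⟧') := by
            exact (shiftEquiv D (1:ℤ)).counitIso.inv.naturality i
          erw [← assoc, hnat, assoc, ← CategoryTheory.Functor.map_comp, hif,
            CategoryTheory.Functor.map_zero, comp_zero]
        obtain ⟨G₀, hG₀⟩ := Triangle.yoneda_exact₃ (Triangle.mk (w ≫ p) i j) hT3
          ((shiftEquiv D (1:ℤ)).counitIso.inv.app E' ≫ (z ≫ x)⟦(1:ℤ)⟧') (by exact hiF)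
        obtain ⟨G, hGA⟩ : ∃ G : ((((Y₀⟦-((m:ℤ)+1)⟧)⟦(-1:ℤ)⟧ : D)⟦(1:ℤ)⟧) ⟶ (N⟦(1:ℤ)⟧)),
            (shiftEquiv D (1:ℤ)).counitIso.inv.app E' ≫ (z ≫ x)⟦(1:ℤ)⟧' = j ≫ G := ⟨G₀, hG₀⟩
        -- e ≫ G = 0
        have hXG : e ≫ G = 0 := by
          have hnat : v' ≫ (shiftEquiv D (1:ℤ)).counitIso.inv.app E' =
              (shiftEquiv D (1:ℤ)).counitIso.inv.app X ≫ ((v'⟦(-1:ℤ)⟧')⟦(1:ℤ)⟧') := by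
            exact (shiftEquiv D (1:ℤ)).counitIso.inv.naturality v'
          erw [heA, assoc, ← hGA, ← assoc, hnat, assoc, ← CategoryTheory.Functor.map_comp,
            ← assoc, hvz, zero_comp, CategoryTheory.Functor.map_zero, comp_zero]
        -- factor G through F⟦1⟧
        obtain ⟨Gbar₀, hGbar₀⟩ := Triangle.yoneda_exact₃ (Triangle.mk w f₁ e).rotate
          (rot_of_distTriang _ hT2) G (by exact hXG)
        obtain ⟨Gbar, hGbarA⟩ : ∃ Gbar : (((F₀⟦-((m:ℤ)+1)⟧)⟦(1:ℤ)⟧ : D) ⟶ (N⟦(1:ℤ)⟧)),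
            G = (-w⟦(1:ℤ)⟧') ≫ Gbar := ⟨Gbar₀, hGbar₀⟩
        -- 𝟙 (N⟦1⟧) factors through G
        have hone : 𝟙 (N⟦(1:ℤ)⟧) =
            (tN⟦(1:ℤ)⟧' ≫ (shiftEquiv D (1:ℤ)).counitIso.hom.app E') ≫ (j ≫ G) := by
          have h0 : 𝟙 N = tN ≫ (z ≫ x) := by
            rw [← assoc, ← htNA, hτx]
          have h2 : 𝟙 (N⟦(1:ℤ)⟧) = tN⟦(1:ℤ)⟧' ≫ (z ≫ x)⟦(1:ℤ)⟧' := by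
            rw [← CategoryTheory.Functor.map_comp, ← h0, CategoryTheory.Functor.map_id]
          have h3 : tN⟦(1:ℤ)⟧' ≫ (z ≫ x)⟦(1:ℤ)⟧' =
              (tN⟦(1:ℤ)⟧' ≫ (shiftEquiv D (1:ℤ)).counitIso.hom.app E') ≫ (j ≫ G) := by
            rw [← hGA]
            erw [assoc, Iso.hom_inv_id_app_assoc]; rfl
          exact h2.trans h3
        -- Hom(F⟦1⟧, C⟦1⟧) = 0
        have hFC : ∀ φ : ((F₀⟦-((m:ℤ)+1)⟧)⟦(1:ℤ)⟧) ⟶ (((Y₀⟦-((m:ℤ)+1)⟧)⟦(-1:ℤ)⟧)⟦(1:ℤ)⟧),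
            φ = 0 := by
          refine hv _ _ ((m:ℤ)-1) ?_ ?_
          · exact hPiso (sIso 1 ((m:ℤ)-1) (m:ℤ) (by ring) _).symm hFm
          · exact hQiso (hC1shift ((m:ℤ)-1+1) (-1) (by ring)).symm
              (hQmono Y₀ (-1) 0 (by omega) hQY0)
        -- conclude that Gbar, G and 𝟙 N vanish
        have hGbar0 : Gbar = 0 := by
          have hmid : (Gbar ≫ (tN⟦(1:ℤ)⟧' ≫ (shiftEquiv D (1:ℤ)).counitIso.hom.app E')) ≫ j
              = 0 := hFC _
          calc Gbar = Gbar ≫ 𝟙 (N⟦(1:ℤ)⟧) := (comp_id _).symm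
            _ = ((Gbar ≫ (tN⟦(1:ℤ)⟧' ≫ (shiftEquiv D (1:ℤ)).counitIso.hom.app E')) ≫ j) ≫ G
                := by rw [hone]; simp only [assoc]
            _ = 0 := by rw [hmid, zero_comp]
        have hG0 : G = 0 := by rw [hGbarA, hGbar0, comp_zero]
        have hN1 : 𝟙 (N⟦(1:ℤ)⟧) = 0 := by rw [hone, hG0, comp_zero, comp_zero]
        have hNid : 𝟙 N = 0 := (shiftFunctor D (1:ℤ)).map_injective
          (by rw [CategoryTheory.Functor.map_id, CategoryTheory.Functor.map_zero]; exact hN1)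
        have hx0 : x = 0 := by
          calc x = x ≫ 𝟙 N := (comp_id x).symm
            _ = 0 := by rw [hNid, comp_zero]
        obtain ⟨β'₀, hβ'₀⟩ := Triangle.coyoneda_exact₂ (Triangle.mk α x y) hT8
          (𝟙 (Z⟦(-1:ℤ)⟧ : D)) (by show 𝟙 (Z⟦(-1:ℤ)⟧ : D) ≫ x = 0; rw [id_comp, hx0])
        obtain ⟨β', hβ'A⟩ : ∃ β' : ((Z⟦(-1:ℤ)⟧ : D) ⟶ A),
            𝟙 (Z⟦(-1:ℤ)⟧ : D) = β' ≫ α := ⟨β'₀, hβ'₀⟩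
        have hβ'β : β' = β := by
          calc β' = β' ≫ (α ≫ β) := by rw [hαβ, comp_id]
            _ = (β' ≫ α) ≫ β := by rw [assoc]
            _ = β := by rw [← hβ'A, id_comp]
        have hβα : β ≫ α = 𝟙 (Z⟦(-1:ℤ)⟧ : D) := by rw [← hβ'β]; exact hβ'A.symm
        have hPA' : P (Z⟦(-1:ℤ)⟧ : D) := hPiso ⟨α, β, hαβ, hβα⟩ hPA
        -- conclusion of the inductive step
        refine ⟨(Z⟦(-1:ℤ)⟧ : D), E', u', v', k', hT6, hPA', hQE'1, ?_⟩
        rw [show ((m+1 : ℕ) : ℤ) = (m:ℤ) + 1 by push_cast; ring]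
        exact hPE'm1
  -- conclude
  intro X
  obtain ⟨n, hn⟩ := hbound X
  have hm : P (X⟦(max (-n) 0 : ℤ)⟧) := hPmono X (-n) _ (le_max_left _ _) hn
  have hm' : P (X⟦(((max (-n) 0).toNat : ℕ) : ℤ)⟧) := by
    rwa [show (((max (-n) 0).toNat : ℕ) : ℤ) = max (-n) 0 by omega]
  obtain ⟨A, E, u, v, k, h1, h2, h3, -⟩ := key (max (-n) 0).toNat X hm'
  exact ⟨A, E, u, v, k, h1, h2, h3⟩
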